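/- First variation of length at a regular triple junction: Let γ¹, γ², γ³ : [0,1] → ℝ² be C² maps with (γⁱ)'(x) ≠ 0 for all x, meeting at a common junction point γ¹(0) = γ²(0) = γ³(0), and suppose the junction is regular, i.e. τ¹(0) + τ²(0) + τ³(0) = 0, where τⁱ = (γⁱ)'/‖(γⁱ)'‖. Let Y¹, Y², Y³ : [0,1] → ℝ² be C¹ maps with Y¹(0) = Y²(0) = Y³(0) and Yⁱ(1) = 0 for i = 1, 2, 3. Then the total length ε ↦ Σ_{i=1}^{3} ∫₀¹ ‖(γⁱ)'(x) + ε(Yⁱ)'(x)‖ dx is differentiable at ε = 0 with derivative equal to −Σ_{i=1}^{3} ∫₀¹ ⟨(τⁱ)'(x), Yⁱ(x)⟩ dx; that is, the boundary terms at the junction cancel and the first variation equals minus the sum of the integrals of ⟨kⁱ, Yⁱ⟩ against arclength, where kⁱ is the curvature vector of γⁱ. -/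

import Mathlib

open scoped RealInnerProductSpace

/-- The unit tangent vector `τ = γ'/‖γ'‖` of a curve `γ`. -/
noncomputable def tangent (γ : ℝ → EuclideanSpace ℝ (Fin 2)) (x : ℝ) :
    EuclideanSpace ℝ (Fin 2) :=
  ‖deriv γ x‖⁻¹ • deriv γ x

open MeasureTheory

lemma hasDerivAt_norm_line {E : Type*} [NormedAddCommGroup E] [InnerProductSpace ℝ E]
    (v w : E) (hv : v ≠ 0) :
    HasDerivAt (fun ε : ℝ => ‖v + ε • w‖) ⟪‖v‖⁻¹ • v, w⟫ 0 := by
  have hg : HasDerivAt (fun ε : ℝ => ⟪v,v⟫ + 2*ε*⟪v,w⟫ + ε^2*⟪w,w⟫) (2*⟪v,w⟫) 0 := by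
    have := ((hasDerivAt_id (0:ℝ)).const_mul 2).mul_const ⟪v,w⟫
    have h2 := ((hasDerivAt_pow 2 (0:ℝ))).mul_const ⟪w,w⟫
    refine ((this.const_add ⟪v,v⟫).add h2).congr_deriv ?_
    simp
  have hvn : (0:ℝ) < ‖v‖ := norm_pos_iff.mpr hv
  have hpos : (0:ℝ) < ⟪v,v⟫ := by rw [real_inner_self_eq_norm_mul_norm]; positivity
  have hs := (Real.hasDerivAt_sqrt (ne_of_gt (by simpa using hpos))).comp 0 hg
  have heq : ∀ ε : ℝ, Real.sqrt (⟪v,v⟫ + 2*ε*⟪v,w⟫ + ε^2*⟪w,w⟫) = ‖v + ε • w‖ := by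
    intro ε
    have : ⟪v + ε • w, v + ε • w⟫ = ⟪v,v⟫ + 2*ε*⟪v,w⟫ + ε^2*⟪w,w⟫ := by
      rw [real_inner_add_add_self, real_inner_smul_right, real_inner_smul_left,
        real_inner_smul_right]
      ring
    rw [← this, real_inner_self_eq_norm_mul_norm, Real.sqrt_mul_self (norm_nonneg _)]
  have key : HasDerivAt (fun ε : ℝ => ‖v + ε • w‖)
      (1 / (2 * Real.sqrt (⟪v,v⟫ + 2*0*⟪v,w⟫ + 0^2*⟪w,w⟫)) * (2*⟪v,w⟫)) 0 := by
    refine HasDerivAt.congr_of_eventuallyEq hs (Filter.Eventually.of_forall fun ε => ?_)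
    exact (heq ε).symm
  convert key using 1
  rw [real_inner_smul_left,
    show ⟪v,v⟫ + 2*0*⟪v,w⟫ + 0^2*⟪w,w⟫ = ⟪v,v⟫ by ring, real_inner_self_eq_norm_mul_norm,
    Real.sqrt_mul_self (norm_nonneg v)]
  field_simp

lemma lip_norm_line {E : Type*} [NormedAddCommGroup E] [NormedSpace ℝ E] (v w : E) :
    LipschitzWith ‖w‖₊ (fun ε : ℝ => ‖v + ε • w‖) := by
  have h1 : LipschitzWith ‖w‖₊ (fun ε : ℝ => v + ε • w) := by
    refine LipschitzWith.of_dist_le_mul fun x y => ?_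
    have h : (v + x • w) - (v + y • w) = (x - y) • w := by module
    rw [dist_eq_norm, dist_eq_norm, h, norm_smul]
    simp [mul_comm]
  simpa [Function.comp_def] using lipschitzWith_one_norm.comp h1

lemma len_hasDerivAt (γ Y : ℝ → EuclideanSpace ℝ (Fin 2))
    (hγ : ContDiff ℝ 2 γ) (hY : ContDiff ℝ 1 Y)
    (hreg : ∀ x ∈ Set.Icc (0:ℝ) 1, deriv γ x ≠ 0) :
    HasDerivAt (fun ε : ℝ => ∫ x in (0:ℝ)..1, ‖deriv γ x + ε • deriv Y x‖)
      (∫ x in (0:ℝ)..1, ⟪tangent γ x, deriv Y x⟫) 0 := by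
  have hγd : Continuous (deriv γ) := hγ.continuous_deriv one_le_two
  have hYd : Continuous (deriv Y) := hY.continuous_deriv le_rfl
  have := (intervalIntegral.hasDerivAt_integral_of_dominated_loc_of_lip
    (F := fun (ε : ℝ) (x : ℝ) => ‖deriv γ x + ε • deriv Y x‖)
    (F' := fun x => ⟪tangent γ x, deriv Y x⟫)
    (μ := volume) (a := 0) (b := 1) (bound := fun x => ‖deriv Y x‖)
    (x₀ := 0) (s := Metric.ball (0:ℝ) 1) (Metric.ball_mem_nhds 0 one_pos)
    (Filter.Eventually.of_forall fun ε =>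
      ((hγd.add (hYd.const_smul ε)).norm).aestronglyMeasurable)
    (by
      apply Continuous.intervalIntegrable
      simpa using hγd.norm)
    ?meas ?lip ?bd ?diff).2
  · exact this
  case meas =>
    have hm : Measurable (tangent γ) := (hγd.norm.measurable.inv).smul hγd.measurable
    exact (hm.inner hYd.measurable).aestronglyMeasurable
  case lip =>
    refine Filter.Eventually.of_forall fun t _ => ?_
    have h := (lip_norm_line (deriv γ t) (deriv Y t)).lipschitzOnWith
      (s := Metric.ball (0:ℝ) 1)
    convert h using 2
    ext
    simp
  case bd => exact (hYd.norm).intervalIntegrable _ _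
  case diff =>
    refine Filter.Eventually.of_forall fun t ht => ?_
    have ht' : t ∈ Set.Icc (0:ℝ) 1 := by
      rw [Set.uIoc_of_le (by norm_num : (0:ℝ) ≤ 1)] at ht
      exact ⟨ht.1.le, ht.2⟩
    exact hasDerivAt_norm_line _ _ (hreg t ht')
lemma parts (γ Y : ℝ → EuclideanSpace ℝ (Fin 2))
    (hγ : ContDiff ℝ 2 γ) (hY : ContDiff ℝ 1 Y)
    (hreg : ∀ x ∈ Set.Icc (0:ℝ) 1, deriv γ x ≠ 0) :
    (∫ x in (0:ℝ)..1, ⟪tangent γ x, deriv Y x⟫) =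
      ⟪tangent γ 1, Y 1⟫ - ⟪tangent γ 0, Y 0⟫ -
      ∫ x in (0:ℝ)..1, ⟪deriv (tangent γ) x, Y x⟫ := by
  have hγd : ContDiff ℝ 1 (deriv γ) := by
    have h2 : ContDiff ℝ ((1:ℕ) + 1) γ := by exact_mod_cast hγ
    exact (contDiff_succ_iff_deriv.mp h2).2.2
  set U : Set ℝ := {x | deriv γ x ≠ 0} with hU
  have hUopen : IsOpen U := isOpen_compl_iff.mpr (isClosed_singleton.preimage hγd.continuous)
  have hsub : Set.Icc (0:ℝ) 1 ⊆ U := fun x hx => hreg x hx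
  have hTat : ∀ x ∈ U, ContDiffAt ℝ 1 (tangent γ) x := by
    intro x hx
    have h1 : ContDiffAt ℝ 1 (deriv γ) x := hγd.contDiffAt
    exact ((h1.norm ℝ hx).inv (norm_ne_zero_iff.mpr hx)).smul h1
  have hTon : ContDiffOn ℝ 1 (tangent γ) U := fun x hx =>
    (hTat x hx).contDiffWithinAt
  have hTd : ContinuousOn (deriv (tangent γ)) U :=
    hTon.continuousOn_deriv_of_isOpen hUopen le_rfl
  have hTc : ContinuousOn (tangent γ) U := hTon.continuousOn
  have hYc : Continuous Y := hY.continuous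
  have hYd : Continuous (deriv Y) := hY.continuous_deriv le_rfl
  have hderiv : ∀ x ∈ Set.uIcc (0:ℝ) 1,
      HasDerivAt (fun t => ⟪tangent γ t, Y t⟫)
        (⟪tangent γ x, deriv Y x⟫ + ⟪deriv (tangent γ) x, Y x⟫) x := by
    intro x hx
    rw [Set.uIcc_of_le (by norm_num : (0:ℝ) ≤ 1)] at hx
    have hT : HasDerivAt (tangent γ) (deriv (tangent γ) x) x :=
      ((hTat x (hsub hx)).differentiableAt one_ne_zero).hasDerivAt
    have hYh : HasDerivAt Y (deriv Y x) x :=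
      (hY.differentiable one_ne_zero x).hasDerivAt
    exact hT.inner ℝ hYh
  have hconton : ContinuousOn
      (fun x => ⟪tangent γ x, deriv Y x⟫ + ⟪deriv (tangent γ) x, Y x⟫)
      (Set.uIcc (0:ℝ) 1) := by
    rw [Set.uIcc_of_le (by norm_num : (0:ℝ) ≤ 1)]
    exact ((hTc.mono hsub).inner (hYd.continuousOn)).add
      ((hTd.mono hsub).inner (hYc.continuousOn))
  have hint : IntervalIntegrable
      (fun x => ⟪tangent γ x, deriv Y x⟫ + ⟪deriv (tangent γ) x, Y x⟫)
      volume 0 1 := hconton.intervalIntegrable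
  have key := intervalIntegral.integral_eq_sub_of_hasDerivAt hderiv hint
  have hint1 : IntervalIntegrable (fun x => ⟪tangent γ x, deriv Y x⟫) volume 0 1 := by
    apply ContinuousOn.intervalIntegrable
    rw [Set.uIcc_of_le (by norm_num : (0:ℝ) ≤ 1)]
    exact (hTc.mono hsub).inner hYd.continuousOn
  have hint2 : IntervalIntegrable (fun x => ⟪deriv (tangent γ) x, Y x⟫) volume 0 1 := by
    apply ContinuousOn.intervalIntegrable
    rw [Set.uIcc_of_le (by norm_num : (0:ℝ) ≤ 1)]
    exact (hTd.mono hsub).inner hYc.continuousOn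
  rw [intervalIntegral.integral_add hint1 hint2] at key
  linarith [key]

/-- **First variation of length at a regular triple junction**: for three regular `C²` curves
meeting at a regular triple junction (`τ¹(0) + τ²(0) + τ³(0) = 0`) and `C¹` variation fields
preserving the junction and fixing the outer endpoints, the boundary terms cancel and the first
variation of the total length equals `−Σᵢ ∫₀¹ ⟨(τⁱ)', Yⁱ⟩ dx`. -/
theorem stmt7 (γ₁ γ₂ γ₃ Y₁ Y₂ Y₃ : ℝ → EuclideanSpace ℝ (Fin 2))
    (hγ₁ : ContDiff ℝ 2 γ₁) (hγ₂ : ContDiff ℝ 2 γ₂) (hγ₃ : ContDiff ℝ 2 γ₃)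
    (hreg₁ : ∀ x ∈ Set.Icc (0 : ℝ) 1, deriv γ₁ x ≠ 0)
    (hreg₂ : ∀ x ∈ Set.Icc (0 : ℝ) 1, deriv γ₂ x ≠ 0)
    (hreg₃ : ∀ x ∈ Set.Icc (0 : ℝ) 1, deriv γ₃ x ≠ 0)
    (hjunction : γ₁ 0 = γ₂ 0 ∧ γ₂ 0 = γ₃ 0)
    (hregular : tangent γ₁ 0 + tangent γ₂ 0 + tangent γ₃ 0 = 0)
    (hY₁ : ContDiff ℝ 1 Y₁) (hY₂ : ContDiff ℝ 1 Y₂) (hY₃ : ContDiff ℝ 1 Y₃)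
    (hYjunction : Y₁ 0 = Y₂ 0 ∧ Y₂ 0 = Y₃ 0)
    (hYend : Y₁ 1 = 0 ∧ Y₂ 1 = 0 ∧ Y₃ 1 = 0) :
    HasDerivAt
      (fun ε : ℝ =>
        (∫ x in (0 : ℝ)..1, ‖deriv γ₁ x + ε • deriv Y₁ x‖) +
        (∫ x in (0 : ℝ)..1, ‖deriv γ₂ x + ε • deriv Y₂ x‖) +
        (∫ x in (0 : ℝ)..1, ‖deriv γ₃ x + ε • deriv Y₃ x‖))
      (-((∫ x in (0 : ℝ)..1, ⟪deriv (tangent γ₁) x, Y₁ x⟫) +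
         (∫ x in (0 : ℝ)..1, ⟪deriv (tangent γ₂) x, Y₂ x⟫) +
         (∫ x in (0 : ℝ)..1, ⟪deriv (tangent γ₃) x, Y₃ x⟫)))
      0 := by
  have h1 := len_hasDerivAt γ₁ Y₁ hγ₁ hY₁ hreg₁
  have h2 := len_hasDerivAt γ₂ Y₂ hγ₂ hY₂ hreg₂
  have h3 := len_hasDerivAt γ₃ Y₃ hγ₃ hY₃ hreg₃
  have hsum := (h1.add h2).add h3
  have p1 := parts γ₁ Y₁ hγ₁ hY₁ hreg₁
  have p2 := parts γ₂ Y₂ hγ₂ hY₂ hreg₂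
  have p3 := parts γ₃ Y₃ hγ₃ hY₃ hreg₃
  have hzero : ⟪tangent γ₁ 0, Y₁ 0⟫ + ⟪tangent γ₂ 0, Y₂ 0⟫ + ⟪tangent γ₃ 0, Y₃ 0⟫ = 0 := by
    rw [← hYjunction.1, ← (hYjunction.1.trans hYjunction.2), ← inner_add_left, ← inner_add_left,
      hregular, inner_zero_left]
  refine hsum.congr_deriv ?_
  rw [p1, p2, p3, hYend.1, hYend.2.1, hYend.2.2, inner_zero_right, inner_zero_right,
    inner_zero_right]
  linarith [hzero]
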